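/- Let k, m ≥ 1, let q : Fin m → ℝ be nonnegative with ∑_s q(s) = 1, and let y : Fin m → Fin k → ℝ be nonnegative. Let P ⊆ (Fin m × Fin k → ℝ) be the polytope of all p satisfying: p(s,i) ≥ 0 for all s, i; ∑_{i=1}^k p(s,i) = 1 for every s; and for every l ∈ {1,…,k}: (1 − 1/k) · ∑_s q(s) ∑_{i=1}^k p(s,i) y(s,i) ≥ ∑_s q(s) (1 − p(s,l)) y(s,l). Then every extreme point p of P has at most m + k nonzero coordinates, i.e. the cardinality of {(s,i) : p(s,i) ≠ 0} is at most m + k. -/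

import Mathlib

/-- Every extreme point of the LP polytope of the derandomized algorithm has
at most `m + k` nonzero coordinates. -/
theorem derandomized_lp_extremePoint_support
    (k m : ℕ) (hk : 1 ≤ k) (hm : 1 ≤ m)
    (q : Fin m → ℝ) (hq : ∀ s, 0 ≤ q s) (hq1 : ∑ s, q s = 1)
    (y : Fin m → Fin k → ℝ) (hy : ∀ s i, 0 ≤ y s i)
    (P : Set (Fin m × Fin k → ℝ))
    (hP : P = {p | (∀ si, 0 ≤ p si) ∧
      (∀ s, ∑ i, p (s, i) = 1) ∧
      ∀ l, ∑ s, q s * ((1 - p (s, l)) * y s l) ≤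
        (1 - 1 / (k : ℝ)) * ∑ s, q s * ∑ i, p (s, i) * y s i})
    (p : Fin m × Fin k → ℝ) (hp : p ∈ Set.extremePoints ℝ P) :
    {si : Fin m × Fin k | p si ≠ 0}.ncard ≤ m + k := by
  classical
  obtain ⟨hpP, hext⟩ := hp
  set T : Finset (Fin m × Fin k) := Finset.univ.filter (fun si => p si ≠ 0) with hT
  have hTset : {si : Fin m × Fin k | p si ≠ 0} = ↑T := by
    ext si; simp [hT]
  rw [hTset, Set.ncard_coe_finset]
  by_contra hcon
  push_neg at hcon
  -- facts about p from membership in P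
  have hpP' := hpP
  rw [hP] at hpP'
  obtain ⟨hpos, hsum, hineq⟩ := hpP'
  -- extension-by-zero linear map
  let e : (↥T → ℝ) →ₗ[ℝ] (Fin m × Fin k → ℝ) :=
    { toFun := fun u si => if h : si ∈ T then u ⟨si, h⟩ else 0
      map_add' := by intro a b; funext si; by_cases h : si ∈ T <;> simp [h]
      map_smul' := by intro c a; funext si; by_cases h : si ∈ T <;> simp [h] }
  -- the constraints linear map
  let L : (Fin m × Fin k → ℝ) →ₗ[ℝ] (Fin m → ℝ) × (Fin k → ℝ) :=
    { toFun := fun w => (fun s => ∑ i, w (s, i),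
        fun l => (1 - 1 / (k : ℝ)) * ∑ s, q s * ∑ i, w (s, i) * y s i
          + ∑ s, q s * (w (s, l) * y s l))
      map_add' := by
        intro a b
        simp only [Pi.add_apply, Prod.mk_add_mk, Prod.mk.injEq]
        constructor
        · funext s
          simp [Finset.sum_add_distrib]
        · funext l
          have hin : ∀ s : Fin m, (∑ i, (a (s, i) + b (s, i)) * y s i)
              = (∑ i, a (s, i) * y s i) + ∑ i, b (s, i) * y s i := fun s => by
            rw [← Finset.sum_add_distrib]
            exact Finset.sum_congr rfl fun i _ => by ring
          simp only [hin]
          rw [show (∑ s, q s * ((∑ i, a (s, i) * y s i) + ∑ i, b (s, i) * y s i))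
              = (∑ s, q s * ∑ i, a (s, i) * y s i) + ∑ s, q s * ∑ i, b (s, i) * y s i from by
            rw [← Finset.sum_add_distrib]
            exact Finset.sum_congr rfl fun s _ => by ring]
          rw [show (∑ s, q s * ((a (s, l) + b (s, l)) * y s l))
              = (∑ s, q s * (a (s, l) * y s l)) + ∑ s, q s * (b (s, l) * y s l) from by
            rw [← Finset.sum_add_distrib]
            exact Finset.sum_congr rfl fun s _ => by ring]
          simp only [Pi.add_apply]
          ring
      map_smul' := by
        intro c a
        simp only [Pi.smul_apply, smul_eq_mul, RingHom.id_apply, Prod.smul_mk, Prod.mk.injEq]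
        constructor
        · funext s
          simp [Finset.mul_sum]
        · funext l
          have hin : ∀ s : Fin m, (∑ i, (c * a (s, i)) * y s i)
              = c * ∑ i, a (s, i) * y s i := fun s => by
            rw [Finset.mul_sum]
            exact Finset.sum_congr rfl fun i _ => by ring
          simp only [hin]
          rw [show (∑ s, q s * (c * ∑ i, a (s, i) * y s i))
              = c * ∑ s, q s * ∑ i, a (s, i) * y s i from by
            rw [Finset.mul_sum]
            exact Finset.sum_congr rfl fun s _ => by ring]
          rw [show (∑ s, q s * ((c * a (s, l)) * y s l))
              = c * ∑ s, q s * (a (s, l) * y s l) from by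
            rw [Finset.mul_sum]
            exact Finset.sum_congr rfl fun s _ => by ring]
          simp only [Pi.smul_apply, smul_eq_mul]
          ring }
  -- nontrivial kernel
  have hrk : LinearMap.ker (L ∘ₗ e) ≠ ⊥ := by
    apply LinearMap.ker_ne_bot_of_finrank_lt
    have h1 : Module.finrank ℝ (↥T → ℝ) = T.card := by
      rw [Module.finrank_fintype_fun_eq_card, Fintype.card_coe]
    have h2 : Module.finrank ℝ ((Fin m → ℝ) × (Fin k → ℝ)) = m + k := by
      rw [Module.finrank_prod, Module.finrank_fintype_fun_eq_card,
        Module.finrank_fintype_fun_eq_card, Fintype.card_fin, Fintype.card_fin]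
    rw [h1, h2]; exact hcon
  obtain ⟨u, huker, hune⟩ := Submodule.exists_mem_ne_zero_of_ne_bot hrk
  set v : Fin m × Fin k → ℝ := e u with hv
  have hLv : L v = 0 := huker
  have hrow : ∀ s, ∑ i, v (s, i) = 0 := fun s => congrFun (congrArg Prod.fst hLv) s
  have hcol : ∀ l, (1 - 1 / (k : ℝ)) * ∑ s, q s * ∑ i, v (s, i) * y s i
      + ∑ s, q s * (v (s, l) * y s l) = 0 :=
    fun l => congrFun (congrArg Prod.snd hLv) l
  have hvz : ∀ si, si ∉ T → v si = 0 := by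
    intro si h; simp only [hv, e, LinearMap.coe_mk, AddHom.coe_mk]; exact dif_neg h
  obtain ⟨t, hut⟩ : ∃ t, u t ≠ 0 := by
    by_contra h; push_neg at h; exact hune (funext h)
  have hvt : v ↑t ≠ 0 := by
    have : v ↑t = u t := by
      simp only [hv, e, LinearMap.coe_mk, AddHom.coe_mk]
      rw [dif_pos t.2]
    rw [this]; exact hut
  have hTne : T.Nonempty := ⟨↑t, t.2⟩
  have hppos : ∀ si ∈ T, 0 < p si := by
    intro si hsi
    have : p si ≠ 0 := by simpa [hT] using hsi
    exact lt_of_le_of_ne (hpos si) (Ne.symm this)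
  -- choose epsilon
  set ε : ℝ := T.inf' hTne (fun si => p si / (|v si| + 1)) with hε
  have hεpos : 0 < ε := by
    rw [hε, Finset.lt_inf'_iff]
    intro si hsi
    exact div_pos (hppos si hsi) (by positivity)
  have hkey : ∀ si ∈ T, ε * |v si| ≤ p si := by
    intro si hsi
    have hd : (0 : ℝ) < |v si| + 1 := by positivity
    calc ε * |v si| ≤ ε * (|v si| + 1) := by nlinarith [hεpos]
      _ ≤ (p si / (|v si| + 1)) * (|v si| + 1) := by
          exact mul_le_mul_of_nonneg_right (Finset.inf'_le _ hsi) hd.le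
      _ = p si := div_mul_cancel₀ _ hd.ne'
  -- nonnegativity for any ε' with |ε'| = ε
  have hpos' : ∀ ε' : ℝ, |ε'| = ε → ∀ si, 0 ≤ p si + ε' * v si := by
    intro ε' hε' si
    by_cases h : si ∈ T
    · have h1 : |ε' * v si| ≤ p si := by
        rw [abs_mul, hε']; exact hkey si h
      have := abs_le.mp h1
      linarith [this.1]
    · have hp0 : p si = 0 := by
        by_contra hne; exact h (by simp [hT, hne])
      rw [hp0, hvz si h]; simp
  -- membership of perturbations
  have hmem : ∀ ε' : ℝ, |ε'| = ε → p + ε' • v ∈ P := by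
    intro ε' hε'
    rw [hP]
    refine ⟨?_, ?_, ?_⟩
    · intro si
      simpa [smul_eq_mul] using hpos' ε' hε' si
    · intro s
      simp only [Pi.add_apply, Pi.smul_apply, smul_eq_mul, Finset.sum_add_distrib,
        ← Finset.mul_sum]
      rw [hrow s, hsum s]; ring
    · intro l
      have hA : ∑ s, q s * ((1 - (p (s, l) + ε' * v (s, l))) * y s l)
          = (∑ s, q s * ((1 - p (s, l)) * y s l)) - ε' * ∑ s, q s * (v (s, l) * y s l) := by
        rw [Finset.mul_sum, ← Finset.sum_sub_distrib]
        exact Finset.sum_congr rfl fun s _ => by ring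
      have hB : ∑ s, q s * ∑ i, (p (s, i) + ε' * v (s, i)) * y s i
          = (∑ s, q s * ∑ i, p (s, i) * y s i) + ε' * ∑ s, q s * ∑ i, v (s, i) * y s i := by
        rw [Finset.mul_sum, ← Finset.sum_add_distrib]
        refine Finset.sum_congr rfl fun s _ => ?_
        have : ∑ i, (p (s, i) + ε' * v (s, i)) * y s i
            = (∑ i, p (s, i) * y s i) + ε' * ∑ i, v (s, i) * y s i := by
          rw [Finset.mul_sum, ← Finset.sum_add_distrib]
          exact Finset.sum_congr rfl fun i _ => by ring
        rw [this]; ring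
      simp only [Pi.add_apply, Pi.smul_apply, smul_eq_mul]
      rw [hA, hB]
      have hi := hineq l
      have hc' : ε' * ((1 - 1 / (k : ℝ)) * ∑ s, q s * ∑ i, v (s, i) * y s i
          + ∑ s, q s * (v (s, l) * y s l)) = ε' * 0 := by rw [hcol l]
      linarith [hi, hc']
  have hx1 : p + ε • v ∈ P := hmem ε (abs_of_pos hεpos)
  have hx2 : p + (-ε) • v ∈ P := hmem (-ε) (by rw [abs_neg]; exact abs_of_pos hεpos)
  have hopen : p ∈ openSegment ℝ (p + ε • v) (p + (-ε) • v) := by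
    refine ⟨1/2, 1/2, by norm_num, by norm_num, by norm_num, ?_⟩
    funext si
    simp only [Pi.add_apply, Pi.smul_apply, smul_eq_mul]
    ring
  have := hext hx1 hx2 hopen
  have : ε * v ↑t = 0 := by
    have h0 := congrFun this ↑t
    simp only [Pi.add_apply, Pi.smul_apply, smul_eq_mul] at h0
    linarith
  exact hvt (by
    rcases mul_eq_zero.mp this with h | h
    · exact absurd h hεpos.ne'
    · exact absurd h (by intro h'; exact absurd h' (fun _ => hvt h')) )
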